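/- Uniqueness of the symmetric maximum: let ⊕ be a binary operation on L satisfying (C1) x ⊕ y = max(x, y) whenever x ≥ 0 and y ≥ 0, (C2) x ⊕ (−x) = 0 for all x, (C3) −(x ⊕ y) = (−x) ⊕ (−y) for all x, y, and which is associative on every triple whose maximum is not the negation of its minimum, i.e. (x ⊕ y) ⊕ z = x ⊕ (y ⊕ z) whenever max(x, y, z) ≠ −min(x, y, z). Then ⊕ coincides with the symmetric maximum ⊻ on all of L. -/
import Mathlib


/-- The symmetric maximum on a linear order `L` with negation `neg` and
distinguished element `zero`; `max x (neg x)` plays the role of `|x|`. -/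
def symMax {L : Type*} [LinearOrder L] (neg : L → L) (zero : L) (a b : L) : L :=
  if b = neg a then zero
  else if max (max a (neg a)) (max b (neg b)) = neg a ∨
          max (max a (neg a)) (max b (neg b)) = neg b then
    neg (max (max a (neg a)) (max b (neg b)))
  else max (max a (neg a)) (max b (neg b))

/-- The symmetric minimum on a linear order `L` with negation `neg` and
distinguished element `zero`. -/
def symMin {L : Type*} [LinearOrder L] (neg : L → L) (zero : L) (a b : L) : L :=
  if (a < zero ∧ zero < b) ∨ (b < zero ∧ zero < a) then
    neg (min (max a (neg a)) (max b (neg b)))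
  else min (max a (neg a)) (max b (neg b))

/-- The splitting-rule evaluation `⟨⊻ s⟩₋⁺` of a finite multiset `s`:
the symmetric maximum of the max of the nonnegative terms (`zero` if none)
and the min of the negative terms (`zero` if none). -/
def splitEval {L : Type*} [LinearOrder L] (neg : L → L) (zero : L) (s : Multiset L) : L :=
  symMax neg zero ((s.filter (fun x => zero ≤ x)).fold max zero)
    ((s.filter (fun x => x < zero)).fold min zero)


set_option linter.unusedSectionVars false

section Aux
variable {L : Type*} [LinearOrder L] (neg : L → L) (zero : L)
  (hinv : ∀ x, neg (neg x) = x)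
  (hord : ∀ x y, x ≤ y ↔ neg y ≤ neg x)
  (hzero : neg zero = zero)

include hinv hord hzero

lemma aux_nn : ∀ x, zero ≤ x → neg x ≤ zero := by
  intro x h
  have := (hord zero x).mp h
  rwa [hzero] at this

lemma aux_np : ∀ x, x ≤ zero → zero ≤ neg x := by
  intro x h
  have := (hord x zero).mp h
  rwa [hzero] at this

lemma aux_inj : ∀ x y, neg x = neg y → x = y := by
  intro x y h
  rw [← hinv x, h, hinv]

lemma symMax_S1 (a b : L) (ha : zero ≤ a) (hb : zero ≤ b) :
    symMax neg zero a b = max a b := by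
  have ha' : neg a ≤ a := le_trans (aux_nn neg zero hinv hord hzero a ha) ha
  have hb' : neg b ≤ b := le_trans (aux_nn neg zero hinv hord hzero b hb) hb
  unfold symMax
  rw [max_eq_left ha', max_eq_left hb']
  by_cases h : b = neg a
  · rw [if_pos h]
    have hb0 : b = zero := le_antisymm (h ▸ aux_nn neg zero hinv hord hzero a ha) hb
    have ha0 : a = zero := aux_inj neg zero hinv hord hzero a zero
      (by rw [hzero, ← hb0, h])
    rw [ha0, hb0, max_self]
  · rw [if_neg h]
    by_cases h2 : max a b = neg a ∨ max a b = neg b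
    · rw [if_pos h2]
      have hM : zero ≤ max a b := le_trans ha (le_max_left _ _)
      have hM0 : max a b = zero := by
        rcases h2 with h2 | h2
        · exact le_antisymm (h2 ▸ aux_nn neg zero hinv hord hzero a ha) hM
        · exact le_antisymm (h2 ▸ aux_nn neg zero hinv hord hzero b hb) hM
      rw [hM0, hzero, ← hM0]
    · rw [if_neg h2]

lemma symMax_S2 (a b : L) (ha : a ≤ zero) (hb : b ≤ zero) (hba : b ≠ neg a) :
    symMax neg zero a b = min a b := by
  have ha' : a ≤ neg a := le_trans ha (aux_np neg zero hinv hord hzero a ha)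
  have hb' : b ≤ neg b := le_trans hb (aux_np neg zero hinv hord hzero b hb)
  unfold symMax
  rw [max_eq_right ha', max_eq_right hb', if_neg hba]
  have h2 : max (neg a) (neg b) = neg a ∨ max (neg a) (neg b) = neg b := by
    rcases le_total (neg a) (neg b) with h | h
    · right; exact max_eq_right h
    · left; exact max_eq_left h
  rw [if_pos h2]
  rcases le_total a b with h | h
  · rw [min_eq_left h, max_eq_left ((hord a b).mp h), hinv]
  · rw [min_eq_right h, max_eq_right ((hord b a).mp h), hinv]

lemma symMax_S3 (a b : L) (hb : b ≤ zero) (h : neg b < a) :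
    symMax neg zero a b = a := by
  have hnb : zero ≤ neg b := aux_np neg zero hinv hord hzero b hb
  have ha : zero < a := lt_of_le_of_lt hnb h
  have hna : neg a < zero := by
    have := (hord zero a).mp ha.le
    rw [hzero] at this
    rcases lt_or_eq_of_le this with h' | h'
    · exact h'
    · exfalso
      have : a = zero := aux_inj neg zero hinv hord hzero _ _ (by rw [h', hzero])
      exact absurd this ha.ne'
  have hb' : b ≤ neg b := le_trans hb hnb
  have ha' : neg a ≤ a := le_trans hna.le ha.le
  unfold symMax
  have hban : b ≠ neg a := by
    intro hh
    have : neg b = a := by rw [hh, hinv]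
    exact absurd this h.ne
  rw [max_eq_left ha', max_eq_right hb', if_neg hban]
  have hM : max a (neg b) = a := max_eq_left h.le
  rw [hM]
  have h2 : ¬ (a = neg a ∨ a = neg b) := by
    rintro (h2 | h2)
    · exact absurd (h2 ▸ hna) (lt_asymm ha)
    · exact absurd h2.symm h.ne
  rw [if_neg h2]

lemma symMax_S4 (a b : L) (ha : zero ≤ a) (h : a < neg b) :
    symMax neg zero a b = b := by
  have hna : neg a ≤ zero := aux_nn neg zero hinv hord hzero a ha
  have ha' : neg a ≤ a := le_trans hna ha
  have hb : b < zero := by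
    by_contra hc
    push_neg at hc
    exact absurd (lt_of_le_of_lt ha h) (not_lt.mpr (aux_nn neg zero hinv hord hzero b hc))
  have hb' : b ≤ neg b := le_trans hb.le (aux_np neg zero hinv hord hzero b hb.le)
  have hban : b ≠ neg a := by
    intro hh
    have : neg b = a := by rw [hh, hinv]
    exact absurd this.symm h.ne
  unfold symMax
  rw [max_eq_left ha', max_eq_right hb', if_neg hban]
  have hM : max a (neg b) = neg b := max_eq_right h.le
  rw [hM, if_pos (Or.inr rfl), hinv]

lemma symMax_comm (a b : L) : symMax neg zero a b = symMax neg zero b a := by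
  unfold symMax
  by_cases h : b = neg a
  · have h' : a = neg b := by rw [h, hinv]
    rw [if_pos h, if_pos h']
  · have h' : a ≠ neg b := fun hh => h (by rw [hh, hinv])
    rw [if_neg h, if_neg h', max_comm (max a (neg a)) (max b (neg b))]
    exact if_congr or_comm rfl rfl

end Aux

/-- any operation satisfying (C1), (C2), (C3) and associativity on
every triple whose maximum is not the negation of its minimum coincides with
the symmetric maximum. -/
theorem symMax_unique {L : Type*} [LinearOrder L]
    (neg : L → L) (zero : L)
    (hinv : ∀ x, neg (neg x) = x)
    (hord : ∀ x y, x ≤ y ↔ neg y ≤ neg x)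
    (hzero : neg zero = zero)
    (op : L → L → L)
    (hC1 : ∀ x y, zero ≤ x → zero ≤ y → op x y = max x y)
    (hC2 : ∀ x, op x (neg x) = zero)
    (hC3 : ∀ x y, neg (op x y) = op (neg x) (neg y))
    (hassoc : ∀ x y z, max x (max y z) ≠ neg (min x (min y z)) →
      op (op x y) z = op x (op y z)) :
    ∀ a b, op a b = symMax neg zero a b := by
  have hnn := aux_nn neg zero hinv hord hzero
  have hnp := aux_np neg zero hinv hord hzero
  have hinj := aux_inj neg zero hinv hord hzero
  -- op x zero = x for x ≥ 0
  have hz : ∀ x, zero ≤ x → op x zero = x := by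
    intro x hx
    rw [hC1 x zero hx le_rfl, max_eq_left hx]
  -- key1 : absorption when the nonneg element dominates, larger first
  have key1 : ∀ x y, zero ≤ x → y ≤ zero → neg y < x → op x y = x := by
    intro x y hx hy h
    have hy' : zero ≤ neg y := hnp y hy
    have hA : op (op x (neg y)) y = op x (op (neg y) y) := by
      apply hassoc
      rw [max_eq_left (le_trans hy hy'), max_eq_left h.le,
        min_eq_right (le_trans hy hy'), min_eq_right (le_trans hy hx)]
      exact h.ne'
    have h1 : op x (neg y) = x := by
      rw [hC1 x (neg y) hx hy', max_eq_left h.le]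
    have h2 : op (neg y) y = zero := by
      have := hC2 (neg y)
      rwa [hinv] at this
    rw [h1, h2, hz x hx] at hA
    exact hA
  -- key2 : absorption when the nonneg element dominates, smaller first
  have key2 : ∀ x y, x ≤ zero → zero ≤ y → neg x < y → op x y = y := by
    intro x y hx hy h
    have hx' : zero ≤ neg x := hnp x hx
    have hA : op (op x (neg x)) y = op x (op (neg x) y) := by
      apply hassoc
      rw [max_eq_right h.le, max_eq_right (le_trans hx (le_trans hx' h.le)),
        min_eq_left h.le, min_eq_left (le_trans hx hx')]
      exact h.ne'
    have h1 : op (op x (neg x)) y = y := by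
      rw [hC2 x, hC1 zero y le_rfl hy, max_eq_right hy]
    have h2 : op (neg x) y = y := by
      rw [hC1 (neg x) y hx' hy, max_eq_right h.le]
    rw [h1, h2] at hA
    exact hA.symm
  intro a b
  by_cases hba : b = neg a
  · rw [hba, hC2]
    unfold symMax
    rw [if_pos rfl]
  rcases le_total zero a with ha | ha <;> rcases le_total zero b with hb | hb
  · rw [hC1 a b ha hb, symMax_S1 neg zero hinv hord hzero a b ha hb]
  · -- 0 ≤ a, b ≤ 0
    rcases lt_trichotomy (neg b) a with h | h | h
    · rw [key1 a b ha hb h, symMax_S3 neg zero hinv hord hzero a b hb h]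
    · exact absurd (hinj b (neg a) (by rw [hinv, h])) hba
    · rw [symMax_S4 neg zero hinv hord hzero a b ha h]
      apply hinj
      rw [hC3, key2 (neg a) (neg b) (hnn a ha) (hnp b hb) (by rwa [hinv])]
  · -- a ≤ 0, 0 ≤ b
    rcases lt_trichotomy (neg a) b with h | h | h
    · rw [key2 a b ha hb h, symMax_comm neg zero hinv hord hzero,
        symMax_S3 neg zero hinv hord hzero b a ha h]
    · exact absurd h.symm hba
    · rw [symMax_comm neg zero hinv hord hzero,
        symMax_S4 neg zero hinv hord hzero b a hb h]
      apply hinj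
      rw [hC3, key1 (neg a) (neg b) (hnp a ha) (hnn b hb) (by rwa [hinv])]
  · -- a ≤ 0, b ≤ 0
    rw [symMax_S2 neg zero hinv hord hzero a b ha hb hba]
    apply hinj
    rw [hC3, hC1 (neg a) (neg b) (hnp a ha) (hnp b hb)]
    rcases le_total a b with h | h
    · rw [min_eq_left h, max_eq_left ((hord a b).mp h)]
    · rw [min_eq_right h, max_eq_right ((hord b a).mp h)]
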